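/- In the Shapley–Scarf-style housing economy with an endowment system satisfying agency, monotonicity, exhaustivity and non-contestability, the direct exclusion core correspondence is Maskin monotonic: if μ is in the direct exclusion core at preference profile R, and R' is such that L_i(μ, R) ⊆ L_i(μ, R') for every agent i (where L_i denotes the lower contour set of μ for agent i), then μ is in the direct exclusion core at R'. -/

import Mathlib

/-- `μ` is an allocation: each house is assigned to at most one agent (the outside
option `none` has unlimited capacity). -/
def IsAlloc {N H : Type*} (μ : N → Option H) : Prop :=
  ∀ i j : N, ∀ h : H, μ i = some h → μ j = some h → i = j

/-- Coalition `K` directly exclusion blocks `μ` with the allocation `σ` at the strict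
preference profile `P` and endowment system `ω`. -/
def ExclBlocks {N H : Type*} (P : N → Option H → Option H → Prop)
    (ω : Finset N → Finset H) (K : Finset N) (μ σ : N → Option H) : Prop :=
  K.Nonempty ∧ IsAlloc σ ∧ (∀ i ∈ K, P i (σ i) (μ i)) ∧
    ∀ j ∉ K, P j (μ j) (σ j) → ∃ h ∈ ω K, μ j = some h

/-- `μ` belongs to the direct exclusion core at `(P, ω)`. -/
def InExclCore {N H : Type*} (P : N → Option H → Option H → Prop)
    (ω : Finset N → Finset H) (μ : N → Option H) : Prop :=
  IsAlloc μ ∧ ∀ (K : Finset N) (σ : N → Option H), ¬ ExclBlocks P ω K μ σ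

/-- The direct exclusion core is Maskin monotonic: if `μ` is in the direct exclusion
core at `P` and every agent's lower contour set of `μ` weakly expands from `P` to `P'`,
then `μ` is in the direct exclusion core at `P'`. -/
theorem exclCore_maskin_monotonic {N H : Type*} [Fintype N] [DecidableEq N] [Fintype H]
    [DecidableEq H]
    (P P' : N → Option H → Option H → Prop)
    (hP : ∀ i : N, IsStrictTotalOrder (Option H) (P i))
    (hP' : ∀ i : N, IsStrictTotalOrder (Option H) (P' i))
    (ω : Finset N → Finset H)
    (hA1 : ω ∅ = ∅)
    (hA2 : ∀ K K' : Finset N, K ⊆ K' → ω K ⊆ ω K')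
    (hA3 : ω Finset.univ = Finset.univ)
    (hA4 : ∀ h : H, ∃ Kh : Finset N, ∀ K : Finset N, h ∈ ω K ↔ Kh ⊆ K)
    (μ : N → Option H) (hcore : InExclCore P ω μ)
    (hmono : ∀ i : N, ∀ σ : N → Option H, IsAlloc σ →
      (σ i = μ i ∨ P i (μ i) (σ i)) → (σ i = μ i ∨ P' i (μ i) (σ i))) :
    InExclCore P' ω μ := by
  obtain ⟨halloc, hnb⟩ := hcore
  refine ⟨halloc, fun K σ hb => ?_⟩
  obtain ⟨hKne, hσ, hpref, hout⟩ := hb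
  refine hnb K σ ⟨hKne, hσ, fun i hi => ?_, fun j hj hPj => ?_⟩
  · -- i ∈ K : P' i (σ i) (μ i) implies P i (σ i) (μ i)
    have h' := hpref i hi
    have hne : σ i ≠ μ i := fun he => (hP' i).irrefl (μ i) (he ▸ h')
    rcases (or_iff_not_imp_left.2 fun h1 => or_iff_not_imp_right.2 fun h2 => (hP i).trichotomous (σ i) (μ i) h1 h2 : P i (σ i) (μ i) ∨ σ i = μ i ∨ P i (μ i) (σ i)) with h | h | h
    · exact h
    · exact absurd h hne
    · rcases hmono i σ hσ (Or.inr h) with he | h2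
      · exact absurd he hne
      · exact absurd h' (fun hc => (hP' i).irrefl (μ i) ((hP' i).trans _ _ _ h2 hc))
  · -- j ∉ K : P j (μ j) (σ j) implies P' j (μ j) (σ j)
    have hne : σ j ≠ μ j := fun he => (hP j).irrefl (μ j) (he ▸ hPj)
    rcases hmono j σ hσ (Or.inr hPj) with he | h2
    · exact absurd he hne
    · exact hout j hj h2
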